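/- Let p > 1, N ≥ 1, and let η, η′, ξ ∈ ℝ^N satisfy |η−ξ| + |η′−ξ| > 0. Then (Φ_p(η,ξ) − Φ_p(η′,ξ))·(η−η′) ≥ min{p−1, 2^{2−p}} (|η−ξ| + |η′−ξ|)^{p−2} |η−η′|². -/

import Mathlib

open Real

/-- `x^(q-1) * x = x^q` for `x ≥ 0`, `q ≠ 0`. -/
lemma aux_rpow_sub_one_mul_self {x : ℝ} (hx : 0 ≤ x) {q : ℝ} (hq : q ≠ 0) :
    x ^ (q - 1) * x = x ^ q := by
  rcases hx.eq_or_lt with rfl | hx'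
  · simp [Real.zero_rpow hq]
  · rw [← Real.rpow_add_one hx'.ne']; ring_nf

/-- Tangent line inequality for convex rpow: `m^q + q m^{q-1}(x-m) ≤ x^q`. -/
lemma aux_tangent_le_rpow {q : ℝ} (hq : 1 ≤ q) {m x : ℝ} (hm : 0 < m) (hx : 0 ≤ x) :
    m ^ q + q * m ^ (q - 1) * (x - m) ≤ x ^ q := by
  have hz : -1 ≤ x / m - 1 := by
    have : 0 ≤ x / m := div_nonneg hx hm.le
    linarith
  have hb := one_add_mul_self_le_rpow_one_add hz hq
  have h1 : (1 : ℝ) + (x / m - 1) = x / m := by ring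
  rw [h1] at hb
  rw [Real.div_rpow hx hm.le q, le_div_iff₀ (Real.rpow_pos_of_pos hm q)] at hb
  have hmq : m ^ (q - 1) * m = m ^ q := aux_rpow_sub_one_mul_self hm.le (by linarith)
  calc m ^ q + q * m ^ (q - 1) * (x - m)
      = (1 + q * (x / m - 1)) * m ^ q := by rw [← hmq]; field_simp
    _ ≤ x ^ q := hb

/-- Endpoint inequality at `x = st` (collinear, same direction). -/
lemma aux_lemA (p : ℝ) (hp : 1 < p) {s t : ℝ} (ht : 0 ≤ t) (hts : t ≤ s) :
    min (p - 1) (2 ^ (2 - p)) * (s + t) ^ (p - 2) * (s - t) ≤ s ^ (p - 1) - t ^ (p - 1) := by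
  have hs : 0 ≤ s := ht.trans hts
  rcases hs.eq_or_lt with rfl | hs'
  · have ht0 : t = 0 := le_antisymm hts ht
    subst ht0; simp
  have hst : 0 < s + t := by linarith
  have hPnn : (0 : ℝ) ≤ (s + t) ^ (p - 2) := Real.rpow_nonneg hst.le _
  rcases le_or_gt 2 p with hp2 | hp2
  · -- p ≥ 2 : use midpoint
    set m := (s + t) / 2 with hm
    have hm0 : 0 < m := by positivity
    have h1 : m ^ (p - 2) ≤ s ^ (p - 2) :=
      Real.rpow_le_rpow hm0.le (by rw [hm]; linarith) (by linarith)
    have h2 : t ^ (p - 2) ≤ m ^ (p - 2) :=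
      Real.rpow_le_rpow ht (by rw [hm]; linarith) (by linarith)
    have e1 : s ^ (p - 2) * s = s ^ (p - 1) := by
      have := aux_rpow_sub_one_mul_self hs (q := p - 1) (by intro h0; rw [sub_eq_zero] at h0; linarith)
      simpa [show p - 1 - 1 = p - 2 by ring] using this
    have e2 : t ^ (p - 2) * t = t ^ (p - 1) := by
      have := aux_rpow_sub_one_mul_self ht (q := p - 1) (by intro h0; rw [sub_eq_zero] at h0; linarith)
      simpa [show p - 1 - 1 = p - 2 by ring] using this
    have e3 : m ^ (p - 2) = (s + t) ^ (p - 2) * 2 ^ (2 - p) := by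
      rw [hm, Real.div_rpow hst.le (by norm_num) (p - 2), div_eq_mul_inv,
        ← Real.rpow_neg (by norm_num : (0:ℝ) ≤ 2)]
      ring_nf
    have hc : min (p - 1) (2 ^ (2 - p)) ≤ 2 ^ (2 - p) := min_le_right _ _
    have hmP : 0 ≤ m ^ (p - 2) := Real.rpow_nonneg hm0.le _
    nlinarith [mul_le_mul_of_nonneg_left h1 hs, mul_le_mul_of_nonneg_left h2 ht,
      mul_le_mul_of_nonneg_right hc (mul_nonneg hPnn (by linarith : (0:ℝ) ≤ s - t))]
  · -- 1 < p < 2 : tangent line at s (concavity)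
    have hc : min (p - 1) (2 ^ (2 - p)) ≤ p - 1 := min_le_left _ _
    have hP : (s + t) ^ (p - 2) ≤ s ^ (p - 2) :=
      Real.rpow_le_rpow_of_nonpos hs' (by linarith) (by linarith)
    have hz : -1 ≤ t / s - 1 := by
      have : 0 ≤ t / s := div_nonneg ht hs
      linarith
    have hb := rpow_one_add_le_one_add_mul_self hz (by linarith : (0:ℝ) ≤ p - 1)
      (by linarith : p - 1 ≤ 1)
    have h1 : (1 : ℝ) + (t / s - 1) = t / s := by ring
    rw [h1, Real.div_rpow ht hs] at hb
    have hsp : 0 < s ^ (p - 1) := Real.rpow_pos_of_pos hs' _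
    rw [div_le_iff₀ hsp] at hb
    have e1 : s ^ (p - 2) * s = s ^ (p - 1) := by
      have := aux_rpow_sub_one_mul_self hs (q := p - 1) (by intro h0; rw [sub_eq_zero] at h0; linarith)
      simpa [show p - 1 - 1 = p - 2 by ring] using this
    have key : (1 + (p - 1) * (t / s - 1)) * s ^ (p - 1)
        = s ^ (p - 1) + (p - 1) * s ^ (p - 2) * (t - s) := by
      rw [← e1]; field_simp
    rw [key] at hb
    nlinarith [mul_le_mul_of_nonneg_right hP
        (mul_nonneg (by linarith : (0:ℝ) ≤ p - 1) (by linarith : (0:ℝ) ≤ s - t)),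
      mul_le_mul_of_nonneg_right hc (mul_nonneg hPnn (by linarith : (0:ℝ) ≤ s - t))]

/-- Endpoint inequality at `x = -st` (collinear, opposite directions). -/
lemma aux_lemB (p : ℝ) (hp : 1 < p) {s t : ℝ} (hs : 0 ≤ s) (ht : 0 ≤ t) (hst : 0 < s + t) :
    min (p - 1) (2 ^ (2 - p)) * (s + t) ^ (p - 1) ≤ s ^ (p - 1) + t ^ (p - 1) := by
  have hPnn : (0 : ℝ) ≤ (s + t) ^ (p - 1) := Real.rpow_nonneg hst.le _
  rcases le_or_gt 2 p with hp2 | hp2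
  · set m := (s + t) / 2 with hm
    have hm0 : 0 < m := by positivity
    have h1 := aux_tangent_le_rpow (q := p - 1) (by linarith) hm0 hs
    have h2 := aux_tangent_le_rpow (q := p - 1) (by linarith) hm0 ht
    have hsum : 2 * m ^ (p - 1) ≤ s ^ (p - 1) + t ^ (p - 1) := by
      have hzero : (p - 1) * m ^ (p - 1 - 1) * ((s - m) + (t - m)) = 0 := by
        rw [hm]; ring
      linarith [add_le_add h1 h2, hzero]
    have e3 : m ^ (p - 1) = (s + t) ^ (p - 1) * 2 ^ (1 - p) := by
      rw [hm, Real.div_rpow hst.le (by norm_num) (p - 1), div_eq_mul_inv,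
        ← Real.rpow_neg (by norm_num : (0:ℝ) ≤ 2)]
      ring_nf
    have e4 : (2 : ℝ) * 2 ^ (1 - p) = 2 ^ (2 - p) := by
      rw [show (2 : ℝ) - p = 1 + (1 - p) by ring, Real.rpow_add (by norm_num : (0:ℝ) < 2),
        Real.rpow_one]
    have hc : min (p - 1) (2 ^ (2 - p)) ≤ 2 ^ (2 - p) := min_le_right _ _
    calc min (p - 1) (2 ^ (2 - p)) * (s + t) ^ (p - 1)
        ≤ 2 ^ (2 - p) * (s + t) ^ (p - 1) := mul_le_mul_of_nonneg_right hc hPnn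
      _ = 2 * m ^ (p - 1) := by rw [e3, ← e4]; ring
      _ ≤ s ^ (p - 1) + t ^ (p - 1) := hsum
  · -- 1 < p < 2 : subadditivity
    have hc : min (p - 1) (2 ^ (2 - p)) ≤ p - 1 := min_le_left _ _
    have hsub : (s + t) ^ (p - 1) ≤ s ^ (p - 1) + t ^ (p - 1) := by
      rcases hs.eq_or_lt with rfl | hs'
      · simp [Real.zero_rpow (ne_of_gt (by linarith : (0:ℝ) < p - 1))]
      rcases ht.eq_or_lt with rfl | ht'
      · simp [Real.zero_rpow (ne_of_gt (by linarith : (0:ℝ) < p - 1))]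
      have e : (s + t) ^ (p - 1 - 1) * (s + t) = (s + t) ^ (p - 1) :=
        aux_rpow_sub_one_mul_self hst.le (by intro h0; rw [sub_eq_zero] at h0; linarith)
      have h1 : (s + t) ^ (p - 1 - 1) ≤ s ^ (p - 1 - 1) :=
        Real.rpow_le_rpow_of_nonpos hs' (by linarith) (by linarith)
      have h2 : (s + t) ^ (p - 1 - 1) ≤ t ^ (p - 1 - 1) :=
        Real.rpow_le_rpow_of_nonpos ht' (by linarith) (by linarith)
      have es : s ^ (p - 1 - 1) * s = s ^ (p - 1) :=
        aux_rpow_sub_one_mul_self hs (by intro h0; rw [sub_eq_zero] at h0; linarith)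
      have et : t ^ (p - 1 - 1) * t = t ^ (p - 1) :=
        aux_rpow_sub_one_mul_self ht (by intro h0; rw [sub_eq_zero] at h0; linarith)
      nlinarith [mul_le_mul_of_nonneg_right h1 hs, mul_le_mul_of_nonneg_right h2 ht]
    nlinarith [mul_le_mul_of_nonneg_right hc hPnn]

/-- The scalar core of the monotonicity inequality: affine in `x = ⟪a,b⟫`, checked at the
Cauchy–Schwarz endpoints `x = ±st`. -/
lemma aux_key_scalar (p : ℝ) (hp : 1 < p) {s t x : ℝ} (hs : 0 ≤ s) (ht : 0 ≤ t)
    (hst : 0 < s + t) (hx1 : x ≤ s * t) (hx2 : -(s * t) ≤ x) :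
    min (p - 1) (2 ^ (2 - p)) * (s + t) ^ (p - 2) * (s ^ 2 - 2 * x + t ^ 2)
      ≤ s ^ (p - 2) * s ^ 2 + t ^ (p - 2) * t ^ 2 - (s ^ (p - 2) + t ^ (p - 2)) * x := by
  set c := min (p - 1) (2 ^ (2 - p)) with hc
  have hc0 : 0 ≤ c := le_min (by linarith) (Real.rpow_pos_of_pos two_pos _).le
  have hc1 : c ≤ 1 := by
    rcases le_or_gt p 2 with h2 | h2
    · exact (min_le_left _ _).trans (by linarith)
    · exact (min_le_right _ _).trans
        (Real.rpow_le_one_of_one_le_of_nonpos (by norm_num) (by linarith))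
  rcases hs.eq_or_lt with rfl | hs'
  · have hx0 : x = 0 := by
      simp only [zero_mul] at hx1 hx2; linarith
    subst hx0
    have h1 : 0 ≤ t ^ (p - 2) * t ^ 2 := by positivity
    simp only [zero_add, mul_zero, sub_zero]
    nlinarith [h1]
  rcases ht.eq_or_lt with rfl | ht'
  · have hx0 : x = 0 := by
      simp only [mul_zero] at hx1 hx2; linarith
    subst hx0
    have h1 : 0 ≤ s ^ (p - 2) * s ^ 2 := by positivity
    simp only [add_zero, mul_zero, sub_zero]
    nlinarith [h1]
  have e1s : s ^ (p - 2) * s = s ^ (p - 1) := by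
    have := aux_rpow_sub_one_mul_self hs (q := p - 1) (by intro h0; rw [sub_eq_zero] at h0; linarith)
    simpa [show p - 1 - 1 = p - 2 by ring] using this
  have e1t : t ^ (p - 2) * t = t ^ (p - 1) := by
    have := aux_rpow_sub_one_mul_self ht (q := p - 1) (by intro h0; rw [sub_eq_zero] at h0; linarith)
    simpa [show p - 1 - 1 = p - 2 by ring] using this
  have eP : (s + t) ^ (p - 2) * (s + t) = (s + t) ^ (p - 1) := by
    have := aux_rpow_sub_one_mul_self hst.le (q := p - 1)
      (by intro h0; rw [sub_eq_zero] at h0; linarith)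
    simpa [show p - 1 - 1 = p - 2 by ring] using this
  have hA' : c * (s + t) ^ (p - 2) * (s - t) ^ 2
      ≤ s ^ (p - 2) * s ^ 2 + t ^ (p - 2) * t ^ 2
        - (s ^ (p - 2) + t ^ (p - 2)) * (s * t) := by
    have expand : (s ^ (p - 1) - t ^ (p - 1)) * (s - t)
        = s ^ (p - 2) * s ^ 2 + t ^ (p - 2) * t ^ 2
          - (s ^ (p - 2) + t ^ (p - 2)) * (s * t) := by
      rw [← e1s, ← e1t]; ring
    rcases le_total t s with hts | hst'
    · have := mul_le_mul_of_nonneg_right (aux_lemA p hp ht hts) (by linarith : (0:ℝ) ≤ s - t)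
      rw [expand] at this
      nlinarith [this]
    · have := mul_le_mul_of_nonneg_right (aux_lemA p hp hs hst') (by linarith : (0:ℝ) ≤ t - s)
      have expand' : (t ^ (p - 1) - s ^ (p - 1)) * (t - s)
          = s ^ (p - 2) * s ^ 2 + t ^ (p - 2) * t ^ 2
            - (s ^ (p - 2) + t ^ (p - 2)) * (s * t) := by
        rw [← e1s, ← e1t]; ring
      rw [show t + s = s + t by ring, expand'] at this
      nlinarith [this]
  have hB' : c * (s + t) ^ (p - 2) * (s + t) ^ 2
      ≤ s ^ (p - 2) * s ^ 2 + t ^ (p - 2) * t ^ 2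
        + (s ^ (p - 2) + t ^ (p - 2)) * (s * t) := by
    have := mul_le_mul_of_nonneg_right (aux_lemB p hp hs ht hst) hst.le
    have expand : (s ^ (p - 1) + t ^ (p - 1)) * (s + t)
        = s ^ (p - 2) * s ^ 2 + t ^ (p - 2) * t ^ 2
          + (s ^ (p - 2) + t ^ (p - 2)) * (s * t) := by
      rw [← e1s, ← e1t]; ring
    calc c * (s + t) ^ (p - 2) * (s + t) ^ 2
        = c * ((s + t) ^ (p - 2) * (s + t)) * (s + t) := by ring
      _ = c * (s + t) ^ (p - 1) * (s + t) := by rw [eP]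
      _ ≤ (s ^ (p - 1) + t ^ (p - 1)) * (s + t) := this
      _ = _ := expand
  rcases le_total (2 * (c * (s + t) ^ (p - 2))) (s ^ (p - 2) + t ^ (p - 2)) with hk | hk
  · nlinarith [hA', mul_le_mul_of_nonneg_right hk (by linarith : (0:ℝ) ≤ s * t - x)]
  · nlinarith [hB', mul_le_mul_of_nonneg_right hk (by linarith : (0:ℝ) ≤ s * t + x)]

/-- The translated p-Laplacian nonlinearity
`Φ_p(η,ξ) = |η−ξ|^{p−2}(η−ξ) + |ξ|^{p−2}ξ`
(with the convention `|x|^{p−2}x = 0` when `x = 0`). -/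
noncomputable def Phi (p : ℝ) {N : ℕ} (η ξ : EuclideanSpace ℝ (Fin N)) :
    EuclideanSpace ℝ (Fin N) :=
  (‖η - ξ‖ ^ (p - 2)) • (η - ξ) + (‖ξ‖ ^ (p - 2)) • ξ

/-- Lemma 3.1, inequality (3.3): for `p > 1` and `|η−ξ| + |η′−ξ| > 0`,
`(Φ_p(η,ξ) − Φ_p(η′,ξ))·(η−η′) ≥ min{p−1, 2^{2−p}} (|η−ξ| + |η′−ξ|)^{p−2} |η−η′|²`. -/
theorem phi_difference_inner_lower_bound (p : ℝ) (hp : 1 < p) (N : ℕ) (hN : 1 ≤ N)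
    (η η' ξ : EuclideanSpace ℝ (Fin N)) (h : 0 < ‖η - ξ‖ + ‖η' - ξ‖) :
    min (p - 1) (2 ^ (2 - p)) * (‖η - ξ‖ + ‖η' - ξ‖) ^ (p - 2) * ‖η - η'‖ ^ 2
      ≤ (inner ℝ (Phi p η ξ - Phi p η' ξ) (η - η') : ℝ) := by
  have hPhi : Phi p η ξ - Phi p η' ξ
      = (‖η - ξ‖ ^ (p - 2)) • (η - ξ) - (‖η' - ξ‖ ^ (p - 2)) • (η' - ξ) := by
    simp only [Phi]; abel
  rw [hPhi]
  set a := η - ξ with ha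
  set b := η' - ξ with hb
  have hab : η - η' = a - b := by rw [ha, hb]; abel
  rw [hab]
  have hinner : (inner ℝ ((‖a‖ ^ (p - 2)) • a - (‖b‖ ^ (p - 2)) • b) (a - b) : ℝ)
      = ‖a‖ ^ (p - 2) * ‖a‖ ^ 2 + ‖b‖ ^ (p - 2) * ‖b‖ ^ 2
        - (‖a‖ ^ (p - 2) + ‖b‖ ^ (p - 2)) * (inner ℝ a b : ℝ) := by
    simp only [inner_sub_left, inner_sub_right, real_inner_smul_left,
      real_inner_self_eq_norm_sq, real_inner_comm b a]
    ring
  rw [hinner]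
  have hns : ‖a - b‖ ^ 2 = ‖a‖ ^ 2 - 2 * (inner ℝ a b : ℝ) + ‖b‖ ^ 2 := norm_sub_sq_real a b
  rw [hns]
  obtain ⟨hcs1, hcs2⟩ := abs_le.mp (abs_real_inner_le_norm a b)
  exact aux_key_scalar p hp (norm_nonneg a) (norm_nonneg b) h hcs2 hcs1
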